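/- Let z ≥ 1 be an integer, μ a probability distribution on a finite set X of unit vectors in R^d, h a nonzero hyperplane normal, and let X_z be the random variable equal to the margin norm ‖S‖_h of a sample S of z points drawn i.i.d. from μ. Suppose M > 0 satisfies Pr[X_z ≥ M] ≥ u and Pr[X_z ≤ M] ≥ u for some u ∈ (0,1]. Then Pr_{x∼μ}[|m(x,h)| ≥ M/√z] ≥ u/z and Pr_{x∼μ}[|m(x,h)| ≤ M] ≥ 1 − ln(1/u)/z. -/

import Mathlib

open scoped RealInnerProductSpace BigOperators Classical

/-- u-median property of the margin norm of an i.i.d. sample of size `z`.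
The probability of a tuple `s : Fin z → X` is `∏ i, μ (s i)`, and its margin norm is
`√(∑ i, m(s i, h)²)`. If `M` is a `u`-median of this quantity, then at least a `u/z`
fraction of `(X,μ)` has normalized margin ≥ `M/√z`, and at least a `1 − ln(1/u)/z`
fraction has normalized margin ≤ `M`. -/
theorem stmt_4 (d z : ℕ) (hz : 1 ≤ z) (X : Finset (EuclideanSpace ℝ (Fin d)))
    (μ : EuclideanSpace ℝ (Fin d) → ℝ)
    (hμ0 : ∀ x ∈ X, 0 ≤ μ x) (hμ1 : ∑ x ∈ X, μ x = 1)
    (hunit : ∀ x ∈ X, ‖x‖ = 1)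
    (h : EuclideanSpace ℝ (Fin d)) (hh : h ≠ 0)
    (M u : ℝ) (hM : 0 < M) (hu : 0 < u) (hu1 : u ≤ 1)
    (hge : u ≤ ∑ s ∈ Finset.univ.filter
      (fun s : Fin z → {x // x ∈ X} =>
        M ≤ Real.sqrt (∑ i, (⟪(s i : EuclideanSpace ℝ (Fin d)), h⟫ / ‖h‖) ^ 2)),
      ∏ i, μ (s i))
    (hle : u ≤ ∑ s ∈ Finset.univ.filter
      (fun s : Fin z → {x // x ∈ X} =>
        Real.sqrt (∑ i, (⟪(s i : EuclideanSpace ℝ (Fin d)), h⟫ / ‖h‖) ^ 2) ≤ M),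
      ∏ i, μ (s i)) :
    u / z ≤ ∑ x ∈ X.filter (fun x => M / Real.sqrt z ≤ |⟪x, h⟫| / ‖h‖), μ x ∧
    1 - Real.log (1 / u) / z ≤ ∑ x ∈ X.filter (fun x => |⟪x, h⟫| / ‖h‖ ≤ M), μ x := by
  classical

  have hz0 : (0:ℝ) < z := by exact_mod_cast hz
  have hnorm : (0:ℝ) < ‖h‖ := norm_pos_iff.mpr hh
  have hμ0' : ∀ x : {x // x ∈ X}, 0 ≤ μ (x : EuclideanSpace ℝ (Fin d)) := fun x => hμ0 x x.2
  have hμ1' : ∑ x : {x // x ∈ X}, μ (x : EuclideanSpace ℝ (Fin d)) = 1 := by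
    rw [Finset.sum_coe_sort]; exact hμ1
  have hw0 : ∀ s : Fin z → {x // x ∈ X}, 0 ≤ ∏ i, μ ((s i : EuclideanSpace ℝ (Fin d))) :=
    fun s => Finset.prod_nonneg fun i _ => hμ0' (s i)
  -- conversion of subtype filtered sums to X.filter sums
  have conv : ∀ P : EuclideanSpace ℝ (Fin d) → Prop,
      ∑ x ∈ Finset.univ.filter (fun x : {x // x ∈ X} => P (x : EuclideanSpace ℝ (Fin d))), μ (x : EuclideanSpace ℝ (Fin d))
        = ∑ x ∈ X.filter P, μ x := by
    intro P
    rw [Finset.sum_filter, Finset.sum_filter, Finset.sum_coe_sort X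
      (fun x => if P x then μ x else 0)]
  -- marginal lemma
  have marg : ∀ (P : {x // x ∈ X} → Prop) (i : Fin z),
      ∑ s ∈ Finset.univ.filter (fun s : Fin z → {x // x ∈ X} => P (s i)),
          ∏ j, μ ((s j : EuclideanSpace ℝ (Fin d)))
        = ∑ x ∈ Finset.univ.filter P, μ (x : EuclideanSpace ℝ (Fin d)) := by
    intro P i
    have ht : Finset.univ.filter (fun s : Fin z → {x // x ∈ X} => P (s i))
        = Fintype.piFinset (fun j =>
            if j = i then Finset.univ.filter P else Finset.univ) := by
      ext s
      simp only [Finset.mem_filter, Finset.mem_univ, true_and, Fintype.mem_piFinset]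
      constructor
      · intro hP j
        by_cases hj : j = i
        · subst hj; simp [hP]
        · simp [hj]
      · intro hall
        have := hall i
        simpa using this
    rw [ht, ← Finset.prod_univ_sum (fun j =>
        if j = i then Finset.univ.filter P else Finset.univ) (fun _ x => μ (x : EuclideanSpace ℝ (Fin d)))]
    rw [Finset.prod_eq_single i]
    · simp
    · intro j _ hj
      rw [if_neg hj]
      exact hμ1'
    · simp
  -- product lemma
  have prodall : ∀ (P : {x // x ∈ X} → Prop),
      ∑ s ∈ Finset.univ.filter (fun s : Fin z → {x // x ∈ X} => ∀ j, P (s j)),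
          ∏ j, μ ((s j : EuclideanSpace ℝ (Fin d)))
        = (∑ x ∈ Finset.univ.filter P, μ (x : EuclideanSpace ℝ (Fin d))) ^ z := by
    intro P
    have ht : Finset.univ.filter (fun s : Fin z → {x // x ∈ X} => ∀ j, P (s j))
        = Fintype.piFinset (fun _ => Finset.univ.filter P) := by
      ext s
      simp [Fintype.mem_piFinset]
    rw [ht, ← Finset.prod_univ_sum (fun _ => Finset.univ.filter P)
        (fun _ x => μ (x : EuclideanSpace ℝ (Fin d)))]
    simp
  constructor
  · -- first part
    set p := ∑ x ∈ X.filter (fun x => M / Real.sqrt z ≤ |⟪x, h⟫| / ‖h‖), μ x with hp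
    -- union bound
    have step1 : ∀ s ∈ Finset.univ.filter
        (fun s : Fin z → {x // x ∈ X} =>
          M ≤ Real.sqrt (∑ i, (⟪(s i : EuclideanSpace ℝ (Fin d)), h⟫ / ‖h‖) ^ 2)),
        ∏ j, μ ((s j : EuclideanSpace ℝ (Fin d))) ≤ ∑ i : Fin z,
          if M / Real.sqrt z ≤ |⟪(s i : EuclideanSpace ℝ (Fin d)), h⟫| / ‖h‖ then ∏ j, μ ((s j : EuclideanSpace ℝ (Fin d))) else 0 := by
      intro s hs
      rw [Finset.mem_filter] at hs
      have hA := hs.2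
      have hsum0 : (0:ℝ) ≤ ∑ i, (⟪(s i : EuclideanSpace ℝ (Fin d)), h⟫ / ‖h‖) ^ 2 :=
        Finset.sum_nonneg fun i _ => sq_nonneg _
      have hM2 : M ^ 2 ≤ ∑ i, (⟪(s i : EuclideanSpace ℝ (Fin d)), h⟫ / ‖h‖) ^ 2 := by
        have := pow_le_pow_left₀ hM.le hA 2
        rwa [Real.sq_sqrt hsum0] at this
      have hex : ∃ i : Fin z, M ^ 2 / z ≤ (⟪(s i : EuclideanSpace ℝ (Fin d)), h⟫ / ‖h‖) ^ 2 := by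
        have : Nonempty (Fin z) := ⟨⟨0, hz⟩⟩
        have hne : (Finset.univ : Finset (Fin z)).Nonempty := Finset.univ_nonempty
        have hsumle : ∑ _i : Fin z, M ^ 2 / z ≤ ∑ i, (⟪(s i : EuclideanSpace ℝ (Fin d)), h⟫ / ‖h‖) ^ 2 := by
          rw [Finset.sum_const, Finset.card_univ, Fintype.card_fin, nsmul_eq_mul]
          rw [mul_div_cancel₀ _ (ne_of_gt hz0)]
          exact hM2
        obtain ⟨i, _, hi⟩ := Finset.exists_le_of_sum_le hne hsumle
        exact ⟨i, hi⟩
      obtain ⟨i, hi⟩ := hex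
      have hBi : M / Real.sqrt z ≤ |⟪(s i : EuclideanSpace ℝ (Fin d)), h⟫| / ‖h‖ := by
        have := Real.sqrt_le_sqrt hi
        rw [Real.sqrt_sq_eq_abs, Real.sqrt_div (sq_nonneg M), Real.sqrt_sq hM.le] at this
        rwa [abs_div, abs_norm] at this
      calc ∏ j, μ ((s j : EuclideanSpace ℝ (Fin d)))
          = if M / Real.sqrt z ≤ |⟪(s i : EuclideanSpace ℝ (Fin d)), h⟫| / ‖h‖ then ∏ j, μ ((s j : EuclideanSpace ℝ (Fin d))) else 0 := by
            rw [if_pos hBi]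
        _ ≤ _ := by
            apply Finset.single_le_sum (f := fun i : Fin z =>
              if M / Real.sqrt z ≤ |⟪(s i : EuclideanSpace ℝ (Fin d)), h⟫| / ‖h‖ then ∏ j, μ ((s j : EuclideanSpace ℝ (Fin d))) else 0)
              (fun i _ => by split <;> first | exact hw0 s | exact le_rfl)
              (Finset.mem_univ i)
    have step2 : u ≤ ∑ i : Fin z, p := by
      calc u ≤ _ := hge
        _ ≤ ∑ s ∈ Finset.univ.filter
            (fun s : Fin z → {x // x ∈ X} =>
              M ≤ Real.sqrt (∑ i, (⟪(s i : EuclideanSpace ℝ (Fin d)), h⟫ / ‖h‖) ^ 2)),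
            ∑ i : Fin z,
              if M / Real.sqrt z ≤ |⟪(s i : EuclideanSpace ℝ (Fin d)), h⟫| / ‖h‖ then ∏ j, μ ((s j : EuclideanSpace ℝ (Fin d))) else 0 :=
          Finset.sum_le_sum step1
        _ ≤ ∑ s : Fin z → {x // x ∈ X}, ∑ i : Fin z,
              if M / Real.sqrt z ≤ |⟪(s i : EuclideanSpace ℝ (Fin d)), h⟫| / ‖h‖ then ∏ j, μ ((s j : EuclideanSpace ℝ (Fin d))) else 0 := by
          apply Finset.sum_le_sum_of_subset_of_nonneg (Finset.filter_subset _ _)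
          intro s _ _
          exact Finset.sum_nonneg fun i _ => by
            (try dsimp only); split <;> first | exact hw0 s | exact le_rfl
        _ = ∑ i : Fin z, ∑ s : Fin z → {x // x ∈ X},
              if M / Real.sqrt z ≤ |⟪(s i : EuclideanSpace ℝ (Fin d)), h⟫| / ‖h‖ then ∏ j, μ ((s j : EuclideanSpace ℝ (Fin d))) else 0 :=
          Finset.sum_comm
        _ = ∑ i : Fin z, p := by
          apply Finset.sum_congr rfl
          intro i _
          rw [← Finset.sum_filter]
          rw [marg (fun x : {x // x ∈ X} => M / Real.sqrt z ≤ |⟪(x : EuclideanSpace ℝ (Fin d)), h⟫| / ‖h‖) i,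
            conv (fun x : EuclideanSpace ℝ (Fin d) => M / Real.sqrt z ≤ |⟪x, h⟫| / ‖h‖)]
    rw [Finset.sum_const, Finset.card_univ, Fintype.card_fin, nsmul_eq_mul] at step2
    rw [div_le_iff₀ hz0, mul_comm]
    exact step2
  · -- second part
    set q := ∑ x ∈ X.filter (fun x => |⟪x, h⟫| / ‖h‖ ≤ M), μ x with hq
    have hq0 : 0 ≤ q := Finset.sum_nonneg fun x hx => hμ0 x (Finset.mem_filter.mp hx).1
    have huq : u ≤ q ^ z := by
      calc u ≤ _ := hle
        _ ≤ ∑ s ∈ Finset.univ.filter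
            (fun s : Fin z → {x // x ∈ X} =>
              ∀ j, |⟪(s j : EuclideanSpace ℝ (Fin d)), h⟫| / ‖h‖ ≤ M),
            ∏ j, μ ((s j : EuclideanSpace ℝ (Fin d))) := by
          apply Finset.sum_le_sum_of_subset_of_nonneg
          · intro s hs
            rw [Finset.mem_filter] at hs ⊢
            refine ⟨Finset.mem_univ _, fun j => ?_⟩
            have hA := hs.2
            have hsum0 : (0:ℝ) ≤ ∑ i, (⟪(s i : EuclideanSpace ℝ (Fin d)), h⟫ / ‖h‖) ^ 2 :=
              Finset.sum_nonneg fun i _ => sq_nonneg _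
            have hterm : (⟪(s j : EuclideanSpace ℝ (Fin d)), h⟫ / ‖h‖) ^ 2 ≤ M ^ 2 := by
              calc (⟪(s j : EuclideanSpace ℝ (Fin d)), h⟫ / ‖h‖) ^ 2
                  ≤ ∑ i, (⟪(s i : EuclideanSpace ℝ (Fin d)), h⟫ / ‖h‖) ^ 2 :=
                    Finset.single_le_sum
                      (f := fun i : Fin z => (⟪((s i : EuclideanSpace ℝ (Fin d))), h⟫ / ‖h‖) ^ 2)
                      (fun i _ => sq_nonneg _) (Finset.mem_univ j)
                _ ≤ M ^ 2 := by
                    have := pow_le_pow_left₀ (Real.sqrt_nonneg _) hA 2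
                    rwa [Real.sq_sqrt hsum0] at this
            have : |⟪(s j : EuclideanSpace ℝ (Fin d)), h⟫ / ‖h‖| ≤ M := by
              have h2 := Real.sqrt_le_sqrt hterm
              rwa [Real.sqrt_sq_eq_abs, Real.sqrt_sq hM.le] at h2
            rwa [abs_div, abs_norm] at this
          · intro s _ _; exact hw0 s
        _ = _ := by
          rw [prodall (fun x : {x // x ∈ X} => |⟪(x : EuclideanSpace ℝ (Fin d)), h⟫| / ‖h‖ ≤ M)]
          rw [conv (fun x : EuclideanSpace ℝ (Fin d) => |⟪x, h⟫| / ‖h‖ ≤ M)]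
    have hqpos : 0 < q := by
      rcases lt_or_eq_of_le hq0 with h' | h'
      · exact h'
      · exfalso
        rw [← h', zero_pow (by omega : z ≠ 0)] at huq
        linarith
    have hlog : Real.log u ≤ z * Real.log q := by
      calc Real.log u ≤ Real.log (q ^ z) := Real.log_le_log hu huq
        _ = z * Real.log q := by rw [Real.log_pow]
    have hlq : Real.log q ≤ q - 1 := Real.log_le_sub_one_of_pos hqpos
    have : Real.log u / z ≤ q - 1 := by
      rw [div_le_iff₀ hz0]
      calc Real.log u ≤ z * Real.log q := hlog
        _ ≤ (q - 1) * z := by nlinarith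
    rw [one_div, Real.log_inv, neg_div]
    linarith [this]
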